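/- Let H be a finite connected simple graph with at least 3 vertices that is not a star, where a star is a graph having a vertex adjacent to all other vertices and containing no further edges. Then there exist finite simple graphs G and G' with constant equal initial colorings such that for every iteration t the multisets of 1-WL colors agree, {{c_t(v) : v ∈ V}} = {{c_t'(v') : v' ∈ V'}}, yet the number of induced subgraphs of G isomorphic to H differs from the number of induced subgraphs of G' isomorphic to H. (Hence message-passing GNNs cannot count induced subgraphs for any connected pattern of 3 or more nodes except star-shaped patterns.) -/

import Mathlib

open scoped Classical

/-- The type of 1-WL colors after `t` refinement rounds, starting from colors in `C`:
`C₀ = C`, `C_{t+1} = C_t × Multiset (C_t)`. -/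
def WLColor (C : Type) : ℕ → Type
  | 0 => C
  | t + 1 => WLColor C t × Multiset (WLColor C t)

/-- The 1-dimensional Weisfeiler-Leman colorings of a finite simple graph `G`
with initial coloring `c0`:
`c_{t+1}(v) = (c_t(v), {{c_t(u) : u ∈ N(v)}})`. -/
noncomputable def wlColoring {V C : Type} [Fintype V] (G : SimpleGraph V)
    (c0 : V → C) : (t : ℕ) → V → WLColor C t
  | 0 => c0
  | t + 1 => fun v =>
      (wlColoring G c0 t v, (G.neighborFinset v).val.map (wlColoring G c0 t))

/-- A star is a graph having a vertex adjacent to all other vertices and no further edges. -/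
def SimpleGraph.IsStar {W : Type} (H : SimpleGraph W) : Prop :=
  ∃ v : W, ∀ a b : W, H.Adj a b ↔ (a = v ∨ b = v) ∧ a ≠ b

/-- The number of induced subgraphs of `G` isomorphic to `H`, i.e. the number of vertex
subsets `S` such that the subgraph of `G` induced on `S` is isomorphic to `H`. -/
noncomputable def inducedSubgraphCount {V W : Type} [Fintype V]
    (G : SimpleGraph V) (H : SimpleGraph W) : ℕ :=
  Nat.card {S : Finset V // Nonempty (G.induce (S : Set V) ≃g H)}

/-! ### Auxiliary material for the proof -/

/-- The color that every vertex of a `d`-regular graph receives at round `t`. -/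
noncomputable def WLAux.constColor {C : Type} (c : C) (d : ℕ) : (t : ℕ) → WLColor C t
  | 0 => c
  | t + 1 => (WLAux.constColor c d t, Multiset.replicate d (WLAux.constColor c d t))

lemma WLAux.wl_regular {V C : Type} [Fintype V] (G : SimpleGraph V) (c : C) (d : ℕ)
    (hreg : ∀ v, (G.neighborFinset v).card = d) :
    ∀ (t : ℕ) (v : V), wlColoring G (fun _ => c) t v = WLAux.constColor c d t := by
  intro t
  induction t with
  | zero => intro v; rfl
  | succ t ih =>
    intro v
    have h2 : (G.neighborFinset v).val.map (wlColoring G (fun _ => c) t)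
        = Multiset.replicate d (WLAux.constColor c d t) := by
      refine Multiset.eq_replicate.mpr ⟨?_, ?_⟩
      · rw [Multiset.card_map]; exact hreg v
      · intro b hb
        obtain ⟨u, _, rfl⟩ := Multiset.mem_map.mp hb
        exact ih u
    calc wlColoring G (fun _ => c) (t+1) v
        = (show WLColor C (t+1) from (wlColoring G (fun _ => c) t v,
            (G.neighborFinset v).val.map (wlColoring G (fun _ => c) t))) := rfl
      _ = (show WLColor C (t+1) from
            (WLAux.constColor c d t, Multiset.replicate d (WLAux.constColor c d t))) := by
            rw [ih v, h2]
      _ = WLAux.constColor c d (t+1) := rfl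

lemma WLAux.multiset_wl_eq {V : Type} [Fintype V] (G G' : SimpleGraph V) (d : ℕ)
    (h : ∀ v, (G.neighborFinset v).card = d) (h' : ∀ v, (G'.neighborFinset v).card = d)
    (C : Type) (c : C) (t : ℕ) :
    Multiset.map (wlColoring G (fun _ => c) t) Finset.univ.val
      = Multiset.map (wlColoring G' (fun _ => c) t) Finset.univ.val := by
  have key : ∀ (K : SimpleGraph V), (∀ v, (K.neighborFinset v).card = d) →
      Multiset.map (wlColoring K (fun _ => c) t) Finset.univ.val
        = Multiset.replicate (Fintype.card V) (WLAux.constColor c d t) := by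
    intro K hK
    refine Multiset.eq_replicate.mpr ⟨?_, ?_⟩
    · simp
    · intro b hb
      obtain ⟨u, _, rfl⟩ := Multiset.mem_map.mp hb
      exact WLAux.wl_regular K c d hK t u
  rw [key G h, key G' h']

section Graphs
variable {W : Type} [Fintype W] (H : SimpleGraph W)

/-- Two copies of `H` with cross edges between distinct non-adjacent vertices. -/
def WLAux.doubleA : SimpleGraph (W × Bool) where
  Adj p q := (p.2 = q.2 ∧ H.Adj p.1 q.1) ∨ (p.2 ≠ q.2 ∧ p.1 ≠ q.1 ∧ ¬H.Adj p.1 q.1)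
  symm := ⟨by
    rintro ⟨u, i⟩ ⟨v, j⟩ (⟨h1, h2⟩ | ⟨h1, h2, h3⟩)
    · exact Or.inl ⟨h1.symm, h2.symm⟩
    · exact Or.inr ⟨h1.symm, h2.symm, fun h => h3 h.symm⟩⟩
  loopless := ⟨by rintro ⟨u, i⟩ (⟨-, h⟩ | ⟨h, -⟩) <;> simp_all⟩

/-- Two disjoint complete graphs. -/
def WLAux.twoCliques : SimpleGraph (W × Bool) where
  Adj p q := p.2 = q.2 ∧ p.1 ≠ q.1
  symm := ⟨by rintro ⟨u, i⟩ ⟨v, j⟩ ⟨h1, h2⟩; exact ⟨h1.symm, h2.symm⟩⟩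
  loopless := ⟨by rintro ⟨u, i⟩ ⟨-, h⟩; exact h rfl⟩

/-- Two disjoint complete graphs plus a perfect matching (a "prism"). -/
def WLAux.prismG : SimpleGraph (W × Bool) where
  Adj p q := (p.2 = q.2 ∧ p.1 ≠ q.1) ∨ (p.2 ≠ q.2 ∧ p.1 = q.1)
  symm := ⟨by
    rintro ⟨u, i⟩ ⟨v, j⟩ (⟨h1, h2⟩ | ⟨h1, h2⟩)
    · exact Or.inl ⟨h1.symm, h2.symm⟩
    · exact Or.inr ⟨h1.symm, h2.symm⟩⟩
  loopless := ⟨by rintro ⟨u, i⟩ (⟨-, h⟩ | ⟨h, -⟩) <;> simp_all⟩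

/-- The complete bipartite graph with the two copies of `W` as parts. -/
def WLAux.biK : SimpleGraph (W × Bool) where
  Adj p q := p.2 ≠ q.2
  symm := ⟨fun p q (h : p.2 ≠ q.2) => h.symm⟩
  loopless := ⟨fun p (h : p.2 ≠ p.2) => h rfl⟩

noncomputable def WLAux.doubleANbhd (u : W) (i : Bool) :
    ((WLAux.doubleA H).neighborSet (u, i)) ≃ {v : W // v ≠ u} where
  toFun q := ⟨(q : W × Bool).1, by
    obtain ⟨⟨v, j⟩, hq⟩ := q
    rcases hq with ⟨-, h⟩ | ⟨-, h, -⟩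
    · exact h.ne'
    · exact Ne.symm h⟩
  invFun v := ⟨(v.1, if H.Adj u v.1 then i else !i), by
    by_cases h : H.Adj u v.1
    · exact Or.inl ⟨by simp [h], h⟩
    · exact Or.inr ⟨by simp [h], Ne.symm v.2, h⟩⟩
  left_inv := by
    rintro ⟨⟨v, j⟩, hq⟩
    rcases hq with ⟨h1, h2⟩ | ⟨h1, -, h3⟩
    · exact Subtype.ext (by simp only [if_pos h2]; exact Prod.ext rfl h1)
    · refine Subtype.ext (by simp only [if_neg h3]; cases i <;> cases j <;> simp_all)
  right_inv := fun v => Subtype.ext rfl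

noncomputable def WLAux.twoCliquesNbhd (u : W) (i : Bool) :
    ((WLAux.twoCliques (W := W)).neighborSet (u, i)) ≃ {v : W // v ≠ u} where
  toFun q := ⟨(q : W × Bool).1, Ne.symm q.2.2⟩
  invFun v := ⟨(v.1, i), rfl, Ne.symm v.2⟩
  left_inv := by rintro ⟨⟨v, j⟩, h1, h2⟩; exact Subtype.ext (Prod.ext rfl h1)
  right_inv := fun v => Subtype.ext rfl

noncomputable def WLAux.prismNbhd (u : W) (i : Bool) :
    ((WLAux.prismG (W := W)).neighborSet (u, i)) ≃ W where
  toFun q := (q : W × Bool).1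
  invFun v := ⟨(v, if v = u then !i else i), by
    by_cases h : v = u
    · exact Or.inr ⟨by simp [h], h.symm⟩
    · exact Or.inl ⟨by simp [h], Ne.symm h⟩⟩
  left_inv := by
    rintro ⟨⟨v, j⟩, hq⟩
    rcases hq with ⟨h1, h2⟩ | ⟨h1, h2⟩
    · exact Subtype.ext (by simp only [if_neg (Ne.symm h2)]; exact Prod.ext rfl h1)
    · refine Subtype.ext (by simp only [if_pos h2.symm]; cases i <;> cases j <;> simp_all)
  right_inv := fun v => rfl

noncomputable def WLAux.biKNbhd (u : W) (i : Bool) :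
    ((WLAux.biK (W := W)).neighborSet (u, i)) ≃ W where
  toFun q := (q : W × Bool).1
  invFun v := ⟨(v, !i), by cases i <;> simp [WLAux.biK]⟩
  left_inv := by
    rintro ⟨⟨v, j⟩, hq⟩
    refine Subtype.ext ?_
    have : (i ≠ j) := hq
    cases i <;> cases j <;> simp_all
  right_inv := fun v => rfl

lemma WLAux.card_ne_sub (u : W) : Fintype.card {v : W // v ≠ u} = Fintype.card W - 1 := by
  simpa using Set.card_ne_eq u

lemma WLAux.degree_eq_card_nbhd {V : Type} [Fintype V] (G : SimpleGraph V) (v : V) :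
    (G.neighborFinset v).card = Fintype.card (G.neighborSet v) :=
  Set.toFinset_card _

lemma WLAux.doubleA_reg (p : W × Bool) :
    ((WLAux.doubleA H).neighborFinset p).card = Fintype.card W - 1 := by
  obtain ⟨u, i⟩ := p
  rw [WLAux.degree_eq_card_nbhd, Fintype.card_congr (WLAux.doubleANbhd H u i),
    WLAux.card_ne_sub]

lemma WLAux.twoCliques_reg (p : W × Bool) :
    ((WLAux.twoCliques (W := W)).neighborFinset p).card = Fintype.card W - 1 := by
  obtain ⟨u, i⟩ := p
  rw [WLAux.degree_eq_card_nbhd, Fintype.card_congr (WLAux.twoCliquesNbhd u i),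
    WLAux.card_ne_sub]

lemma WLAux.prism_reg (p : W × Bool) :
    ((WLAux.prismG (W := W)).neighborFinset p).card = Fintype.card W := by
  obtain ⟨u, i⟩ := p
  rw [WLAux.degree_eq_card_nbhd, Fintype.card_congr (WLAux.prismNbhd u i)]

lemma WLAux.biK_reg (p : W × Bool) :
    ((WLAux.biK (W := W)).neighborFinset p).card = Fintype.card W := by
  obtain ⟨u, i⟩ := p
  rw [WLAux.degree_eq_card_nbhd, Fintype.card_congr (WLAux.biKNbhd u i)]

end Graphs

noncomputable def WLAux.induceIso {V V' : Type} (e : V ≃ V') (G : SimpleGraph V')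
    (S : Finset V) (T : Finset V') (h : ∀ x : V, x ∈ S ↔ e x ∈ T) :
    (G.comap ⇑e).induce (↑S : Set V) ≃g G.induce (↑T : Set V') where
  toEquiv := Equiv.subtypeEquiv e (fun x => by simpa using h x)
  map_rel_iff' := Iff.rfl

noncomputable def WLAux.sideIso {W : Type} [Fintype W] (H : SimpleGraph W)
    (G₀ : SimpleGraph (W × Bool))
    (hadj : ∀ a b : W, G₀.Adj (a, true) (b, true) ↔ H.Adj a b) :
    H ≃g G₀.induce (↑(Finset.univ.image (fun w : W => (w, true))) : Set (W × Bool)) where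
  toFun w := ⟨(w, true), by simp⟩
  invFun p := (p : W × Bool).1
  left_inv w := rfl
  right_inv p := Subtype.ext (by
    obtain ⟨a, -, ha⟩ := Finset.mem_image.mp (Finset.mem_coe.mp p.2)
    exact Prod.ext rfl (by rw [← ha]))
  map_rel_iff' := by
    intro a b
    simpa using hadj a b

lemma WLAux.count_ne_of {n : ℕ} {W : Type} [Fintype W] (G G' : SimpleGraph (Fin n))
    (H : SimpleGraph W)
    (S : Finset (Fin n)) (hS : Nonempty (G.induce (↑S : Set (Fin n)) ≃g H))
    (h0 : ∀ S' : Finset (Fin n), (G'.induce (↑S' : Set (Fin n)) ≃g H) → False) :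
    inducedSubgraphCount G H ≠ inducedSubgraphCount G' H := by
  have h1 : inducedSubgraphCount G' H = 0 := by
    have : IsEmpty {S : Finset (Fin n) // Nonempty (G'.induce (↑S : Set (Fin n)) ≃g H)} :=
      ⟨by rintro ⟨S', ⟨g⟩⟩; exact h0 S' g⟩
    simp [inducedSubgraphCount, Nat.card_of_isEmpty]
  have h2 : 0 < inducedSubgraphCount G H := by
    have : Nonempty {S : Finset (Fin n) // Nonempty (G.induce (↑S : Set (Fin n)) ≃g H)} :=
      ⟨⟨S, hS⟩⟩
    exact Nat.card_pos
  omega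

lemma WLAux.card_neighborFinset_comap {V V' : Type} [Fintype V] [Fintype V']
    (G : SimpleGraph V') (e : V ≃ V') (a : V) :
    ((G.comap ⇑e).neighborFinset a).card = (G.neighborFinset (e a)).card := by
  simp only [SimpleGraph.neighborFinset_def, Set.toFinset_card]
  exact Fintype.card_congr (Equiv.subtypeEquiv e (fun b => by simp))

/-- The key assembly lemma: transports a pair of `d`-regular graphs on `W × Bool` with
different induced-subgraph counts to graphs on `Fin n`. -/
lemma WLAux.master {W : Type} [Fintype W] (H : SimpleGraph W)
    (G₀ G₀' : SimpleGraph (W × Bool)) (d : ℕ)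
    (hreg : ∀ p, (G₀.neighborFinset p).card = d)
    (hreg' : ∀ p, (G₀'.neighborFinset p).card = d)
    (T : Finset (W × Bool)) (hpos : Nonempty (G₀.induce (↑T : Set (W × Bool)) ≃g H))
    (hzero : ∀ T' : Finset (W × Bool), (G₀'.induce (↑T' : Set (W × Bool)) ≃g H) → False) :
    ∃ (n n' : ℕ) (G : SimpleGraph (Fin n)) (G' : SimpleGraph (Fin n')),
      (∀ (C : Type) (c : C) (t : ℕ),
          Multiset.map (wlColoring G (fun _ => c) t) Finset.univ.val
            = Multiset.map (wlColoring G' (fun _ => c) t) Finset.univ.val)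
      ∧ inducedSubgraphCount G H ≠ inducedSubgraphCount G' H := by
  set n := Fintype.card (W × Bool) with hn
  let e : (W × Bool) ≃ Fin n := Fintype.equivFin _
  refine ⟨n, n, G₀.comap ⇑e.symm, G₀'.comap ⇑e.symm, ?_, ?_⟩
  · intro C c t
    refine WLAux.multiset_wl_eq _ _ d (fun v => ?_) (fun v => ?_) C c t
    · convert (WLAux.card_neighborFinset_comap G₀ e.symm v).trans (hreg _)
    · convert (WLAux.card_neighborFinset_comap G₀' e.symm v).trans (hreg' _)
  · refine WLAux.count_ne_of _ _ H (T.image e) ?_ ?_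
    · obtain ⟨g⟩ := hpos
      refine ⟨(WLAux.induceIso e.symm G₀ (T.image e) T (fun x => ?_)).trans g⟩
      constructor
      · intro hx
        obtain ⟨a, ha, rfl⟩ := Finset.mem_image.mp hx
        simpa using ha
      · intro hx
        exact Finset.mem_image.mpr ⟨e.symm x, hx, by simp⟩
    · intro S' g
      refine hzero (S'.image ⇑e.symm)
        ((WLAux.induceIso e.symm G₀' S' (S'.image ⇑e.symm) (fun x => ?_)).symm.trans g)
      constructor
      · intro hx
        exact Finset.mem_image_of_mem _ hx
      · intro hx
        obtain ⟨a, ha, h2⟩ := Finset.mem_image.mp hx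
        rwa [← e.symm.injective h2]

lemma WLAux.biK_zero {W : Type} [Fintype W] (H : SimpleGraph W)
    (hcomp : ∀ a b : W, a ≠ b → H.Adj a b) (hcard : 3 ≤ Fintype.card W)
    (T : Finset (W × Bool))
    (f : (WLAux.biK (W := W)).induce (↑T : Set (W × Bool)) ≃g H) : False := by
  have hTcard : T.card = Fintype.card W := by
    calc T.card = Fintype.card {x // x ∈ T} := (Fintype.card_coe T).symm
      _ = Fintype.card {x // x ∈ (↑T : Set (W × Bool))} := Fintype.card_congr (Equiv.refl _)
      _ = Fintype.card W := Fintype.card_congr f.toEquiv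
  obtain ⟨a, ha, b, hb, hab, h2⟩ :=
    Finset.exists_ne_map_eq_of_card_lt_of_maps_to
      (t := (Finset.univ : Finset Bool)) (f := fun p : W × Bool => p.2)
      (by rw [hTcard, Finset.card_univ, Fintype.card_bool]; omega)
      (fun (x : W × Bool) _ => Finset.mem_univ x.2)
  have ha' : a ∈ (↑T : Set (W × Bool)) := Finset.mem_coe.mpr ha
  have hb' : b ∈ (↑T : Set (W × Bool)) := Finset.mem_coe.mpr hb
  have hxy : (⟨a, ha'⟩ : (↑T : Set (W × Bool))) ≠ ⟨b, hb'⟩ :=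
    fun h => hab (congrArg Subtype.val h)
  have hA : H.Adj (f ⟨a, ha'⟩) (f ⟨b, hb'⟩) := hcomp _ _ (f.toEquiv.injective.ne hxy)
  have hadj := f.map_rel_iff.mp hA
  exact (hadj : a.2 ≠ b.2) h2

lemma WLAux.twoCliques_zero {W : Type} [Fintype W] (H : SimpleGraph W)
    (hconn : H.Connected) (w₁ w₂ : W) (hne : w₁ ≠ w₂) (hnadj : ¬H.Adj w₁ w₂)
    (T : Finset (W × Bool))
    (f : (WLAux.twoCliques (W := W)).induce (↑T : Set (W × Bool)) ≃g H) : False := by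
  have hConnT : ((WLAux.twoCliques (W := W)).induce (↑T : Set (W × Bool))).Connected :=
    f.connected_iff.mpr hconn
  have hside : ∀ x y : (↑T : Set (W × Bool)),
      ((WLAux.twoCliques (W := W)).induce (↑T : Set (W × Bool))).Reachable x y →
      (x : W × Bool).2 = (y : W × Bool).2 := by
    intro x y h
    obtain ⟨w⟩ := h
    induction w with
    | nil => rfl
    | cons hadj p ih => exact (hadj.1 : _ = _).trans ih
  set x := f.symm w₁ with hx
  set y := f.symm w₂ with hy
  have hxy : x ≠ y := by
    intro h
    apply hne
    have := congrArg f h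
    rwa [RelIso.apply_symm_apply, RelIso.apply_symm_apply] at this
  have h2 : (↑x : W × Bool).2 = (↑y : W × Bool).2 := hside x y (hConnT.preconnected x y)
  have h1 : (↑x : W × Bool).1 ≠ (↑y : W × Bool).1 := by
    intro h
    exact hxy (Subtype.ext (Prod.ext h h2))
  have hadj : ((WLAux.twoCliques (W := W)).induce (↑T : Set (W × Bool))).Adj x y := ⟨h2, h1⟩
  have hH : H.Adj (f x) (f y) := f.map_rel_iff.mpr hadj
  rw [hx, hy, RelIso.apply_symm_apply, RelIso.apply_symm_apply] at hH
  exact hnadj hH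

/-- For any connected pattern `H` on at least 3 vertices that is not a star, there exist
graphs with constant equal initial colorings that are indistinguishable by 1-WL at every
iteration yet contain different numbers of induced copies of `H`.  Hence message-passing
GNNs cannot count induced subgraphs for any such pattern. -/
theorem wl_cannot_count_induced_subgraphs {W : Type} [Fintype W] (H : SimpleGraph W)
    (hconn : H.Connected) (hcard : 3 ≤ Fintype.card W) (hstar : ¬ H.IsStar) :
    ∃ (n n' : ℕ) (G : SimpleGraph (Fin n)) (G' : SimpleGraph (Fin n')),
      (∀ (C : Type) (c : C) (t : ℕ),
          Multiset.map (wlColoring G (fun _ => c) t) Finset.univ.val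
            = Multiset.map (wlColoring G' (fun _ => c) t) Finset.univ.val)
      ∧ inducedSubgraphCount G H ≠ inducedSubgraphCount G' H := by
  classical
  by_cases hcomp : ∀ a b : W, a ≠ b → H.Adj a b
  · -- `H` is a complete graph: use the prism versus the complete bipartite graph.
    refine WLAux.master H (WLAux.prismG) (WLAux.biK) (Fintype.card W)
      WLAux.prism_reg WLAux.biK_reg
      (Finset.univ.image (fun w : W => (w, true))) ?_
      (fun T' g => WLAux.biK_zero H hcomp hcard T' g)
    refine ⟨(WLAux.sideIso H WLAux.prismG (fun a b => ?_)).symm⟩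
    constructor
    · rintro (⟨-, h⟩ | ⟨h, -⟩)
      · exact hcomp a b h
      · exact absurd rfl h
    · intro h
      exact Or.inl ⟨rfl, h.ne⟩
  · -- `H` has two distinct non-adjacent vertices.
    push_neg at hcomp
    obtain ⟨w₁, w₂, hne, hnadj⟩ := hcomp
    refine WLAux.master H (WLAux.doubleA H) (WLAux.twoCliques) (Fintype.card W - 1)
      (WLAux.doubleA_reg H) WLAux.twoCliques_reg
      (Finset.univ.image (fun w : W => (w, true))) ?_
      (fun T' g => WLAux.twoCliques_zero H hconn w₁ w₂ hne hnadj T' g)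
    refine ⟨(WLAux.sideIso H (WLAux.doubleA H) (fun a b => ?_)).symm⟩
    constructor
    · rintro (⟨-, h⟩ | ⟨h, -⟩)
      · exact h
      · exact absurd rfl h
    · intro h
      exact Or.inl ⟨rfl, h⟩
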